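/- Under the Assumption with G a finite group, assume that the stabilizer of a_1 in G is trivial, i.e., G_{a_1} = {id}. Then the polynomials f_1 = ∏_{σ∈G} (y_1 − σ·a_1) and, for 2 ≤ i ≤ n, f_i = y_i − Σ_{σ∈G} (σ·a_i) · ∏_{τ∈G∖{σ}} (y_1 − τ·a_1)/(σ·a_1 − τ·a_1), form a reduced Gröbner basis of the Derksen ideal D_{a_1,…,a_n} ⊆ L[y_1,…,y_n] with respect to every monomial ordering satisfying y_1^k < y_i for all i, k > 1. Moreover, with a := discr(f_1) ∈ R^G ∖ {0} the discriminant of f_1 as a polynomial in y_1, one has a·f_i ∈ R[y_1,…,y_n] for all i. -/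

import Mathlib

open MvPolynomial
noncomputable section

namespace Derksen

variable {L : Type*} [Field L]

/-- Coefficient-wise action of a group element on a multivariate polynomial
(the variables are fixed). -/
def polyAct (G : Type*) [Group G] [MulSemiringAction G L] {n : ℕ} (σ : G)
    (f : MvPolynomial (Fin n) L) : MvPolynomial (Fin n) L :=
  MvPolynomial.map (MulSemiringAction.toRingHom G L σ) f

/-- The Derksen ideal `D_{a_1,…,a_n} = ⋂_{σ ∈ G} (y_1 − σ·a_1, …, y_n − σ·a_n)`. -/
def derksenIdeal (G : Type*) [Group G] [MulSemiringAction G L] {n : ℕ}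
    (a : Fin n → L) : Ideal (MvPolynomial (Fin n) L) :=
  ⨅ σ : G, Ideal.span (Set.range fun i => X i - C (σ • a i))

/-- The leading monomial of a multivariate polynomial with respect to a
monomial order (it is `0` for the zero polynomial). -/
def lm {n : ℕ} (m : MonomialOrder (Fin n)) {S : Type*} [CommSemiring S]
    (f : MvPolynomial (Fin n) S) : Fin n →₀ ℕ :=
  m.toSyn.symm (f.support.sup fun d => m.toSyn d)

/-- The leading coefficient with respect to a monomial order. -/
def lc {n : ℕ} (m : MonomialOrder (Fin n)) {S : Type*} [CommSemiring S]
    (f : MvPolynomial (Fin n) S) : S :=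
  f.coeff (lm m f)

/-- A (finite) Gröbner basis of an ideal of a polynomial ring over a field,
with respect to a monomial order: it consists of nonzero elements of the ideal,
generates it, and the leading monomial of every nonzero element of the ideal is
divisible by the leading monomial of some basis element. -/
structure IsGroebnerBasis {n : ℕ} (m : MonomialOrder (Fin n))
    (E : Ideal (MvPolynomial (Fin n) L)) (B : Finset (MvPolynomial (Fin n) L)) : Prop where
  zero_not_mem : (0 : MvPolynomial (Fin n) L) ∉ B
  subset : (B : Set (MvPolynomial (Fin n) L)) ⊆ E
  span_eq : Ideal.span (B : Set (MvPolynomial (Fin n) L)) = E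
  lm_dvd : ∀ f ∈ E, f ≠ 0 → ∃ g ∈ B, lm m g ≤ lm m f

/-- A reduced Gröbner basis: all elements are monic and no monomial occurring in
a basis element is divisible by the leading monomial of another basis element. -/
structure IsReducedGroebnerBasis {n : ℕ} (m : MonomialOrder (Fin n))
    (E : Ideal (MvPolynomial (Fin n) L)) (B : Finset (MvPolynomial (Fin n) L))
    extends IsGroebnerBasis m E B : Prop where
  monic : ∀ g ∈ B, lc m g = 1
  reduced : ∀ g ∈ B, ∀ g' ∈ B, g' ≠ g → ∀ d ∈ g.support, ¬ lm m g' ≤ d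

/-- The `K`-subalgebra of `L` (as a subring) generated by the coefficients of
the polynomials of `B`. -/
def coeffAlgebra (K : Subring L) {n : ℕ} (B : Finset (MvPolynomial (Fin n) L)) :
    Subring L :=
  Subring.closure (↑K ∪ {x : L | ∃ g ∈ B, ∃ d : Fin n →₀ ℕ, coeff d g = x})

end Derksen

section Helpers

namespace Derksen

open scoped MonomialOrder

variable {n : ℕ}

section LM

variable {m : MonomialOrder (Fin n)} {S : Type*} [CommSemiring S]
  {f : MvPolynomial (Fin n) S}

lemma toSyn_lm (f : MvPolynomial (Fin n) S) :
    m.toSyn (lm m f) = f.support.sup fun d => m.toSyn d := by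
  simp [lm]

lemma lm_mem_support (hf : f ≠ 0) : lm m f ∈ f.support := by
  obtain ⟨d, hd, hsup⟩ := Finset.exists_mem_eq_sup f.support
    (by simpa using hf) fun d => m.toSyn d
  have : lm m f = d := by
    apply m.toSyn.injective
    rw [toSyn_lm, hsup]
  rwa [this]

lemma le_toSyn_lm {d : Fin n →₀ ℕ} (hd : d ∈ f.support) :
    m.toSyn d ≤ m.toSyn (lm m f) := by
  rw [toSyn_lm]; exact Finset.le_sup hd

lemma lm_eq_of {d₀ : Fin n →₀ ℕ} (hd₀ : d₀ ∈ f.support)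
    (h : ∀ d ∈ f.support, m.toSyn d ≤ m.toSyn d₀) : lm m f = d₀ := by
  apply m.toSyn.injective
  rw [toSyn_lm]
  exact le_antisymm (Finset.sup_le h) (Finset.le_sup hd₀)

lemma lc_ne_zero (hf : f ≠ 0) : lc m f ≠ 0 := by
  simpa [lc, MvPolynomial.mem_support_iff] using lm_mem_support (m := m) hf

lemma single_toSyn_le {j : Fin n} {k l : ℕ} (h : k ≤ l) :
    m.toSyn (Finsupp.single j k) ≤ m.toSyn (Finsupp.single j l) :=
  m.toSyn_monotone (Finsupp.single_le_single.mpr h)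

end LM

section Eval

variable {L : Type*} [CommRing L]

lemma sub_C_eval_mem_span (v : Fin n → L) (f : MvPolynomial (Fin n) L) :
    f - C (eval v f) ∈ Ideal.span (Set.range fun i => X i - C (v i)) := by
  induction f using MvPolynomial.induction_on with
  | C a => simp
  | add p q hp hq =>
    have : p + q - C (eval v (p + q)) = (p - C (eval v p)) + (q - C (eval v q)) := by
      rw [map_add, map_add]; ring
    rw [this]
    exact Ideal.add_mem _ hp hq
  | mul_X p i hp =>
    have : p * X i - C (eval v (p * X i)) =
        p * (X i - C (v i)) + (p - C (eval v p)) * C (v i) := by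
      rw [map_mul, eval_X, map_mul]; ring
    rw [this]
    exact Ideal.add_mem _
      (Ideal.mul_mem_left _ _ (Ideal.subset_span ⟨i, rfl⟩))
      (Ideal.mul_mem_right _ _ hp)

lemma mem_span_iff_eval_eq_zero (v : Fin n → L) (f : MvPolynomial (Fin n) L) :
    f ∈ Ideal.span (Set.range fun i => X i - C (v i)) ↔ eval v f = 0 := by
  constructor
  · intro hf
    have : Ideal.span (Set.range fun i => X i - C (v i)) ≤ RingHom.ker (eval v) := by
      rw [Ideal.span_le]
      rintro _ ⟨i, rfl⟩
      simp [RingHom.mem_ker]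
    exact this hf
  · intro hf
    simpa [hf] using sub_C_eval_mem_span v f

lemma single_sub_single {j : Fin n} {k : ℕ} :
    Finsupp.single j (k + 1) - Finsupp.single j 1 = Finsupp.single j k := by
  classical
  ext i
  by_cases h : i = j <;> simp [Finsupp.single_apply, h]

/-- Coefficients of a product `∏ (X j - C (c σ))`. -/
lemma prod_X_sub_C_coeff {G : Type*} (j : Fin n) (s : Finset G) (c : G → L) :
    (∀ d, coeff d (∏ σ ∈ s, (X j - C (c σ))) ≠ 0 →
      ((∀ i, i ≠ j → d i = 0) ∧ d j ≤ s.card)) ∧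
    coeff (Finsupp.single j s.card) (∏ σ ∈ s, (X j - C (c σ))) = 1 := by
  classical
  induction s using Finset.induction_on with
  | empty =>
    constructor
    · intro d hd
      rw [Finset.prod_empty, MvPolynomial.coeff_one] at hd
      have hd0 : d = 0 := by by_contra h; simp [Ne.symm h] at hd
      subst hd0; simp
    · simp
  | @insert σ s hσ ih =>
    rw [Finset.prod_insert hσ]
    have expand : (X j - C (c σ)) * ∏ τ ∈ s, (X j - C (c τ)) =
        X j * (∏ τ ∈ s, (X j - C (c τ))) - C (c σ) * ∏ τ ∈ s, (X j - C (c τ)) := by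
      ring
    rw [expand]
    constructor
    · intro d hd
      rw [coeff_sub] at hd
      have : coeff d (X j * ∏ τ ∈ s, (X j - C (c τ))) ≠ 0 ∨
          coeff d (C (c σ) * ∏ τ ∈ s, (X j - C (c τ))) ≠ 0 := by
        by_contra h
        push_neg at h
        rw [h.1, h.2, sub_zero] at hd; exact hd rfl
      rcases this with h | h
      · rw [coeff_X_mul'] at h
        split_ifs at h with hj
        · obtain ⟨h1, h2⟩ := (ih.1) _ h
          constructor
          · intro i hi
            have := h1 i hi
            simpa [Finsupp.single_apply, Ne.symm hi] using this
          · have := h2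
            rw [Finsupp.coe_tsub, Pi.sub_apply, Finsupp.single_apply, if_pos rfl] at this
            rw [Finset.card_insert_of_notMem hσ]
            omega
        · exact absurd rfl h
      · rw [coeff_C_mul] at h
        have hne : coeff d (∏ τ ∈ s, (X j - C (c τ))) ≠ 0 := by
          intro h0; rw [h0, mul_zero] at h; exact h rfl
        obtain ⟨h1, h2⟩ := (ih.1) _ hne
        exact ⟨h1, by rw [Finset.card_insert_of_notMem hσ]; omega⟩
    · rw [Finset.card_insert_of_notMem hσ, coeff_sub, coeff_X_mul', coeff_C_mul]
      have hmem : j ∈ (Finsupp.single j (s.card + 1)).support := by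
        simp
      rw [if_pos hmem, single_sub_single, ih.2]
      have : coeff (Finsupp.single j (s.card + 1)) (∏ τ ∈ s, (X j - C (c τ))) = 0 := by
        by_contra h
        have := (ih.1 _ h).2
        simp at this
      rw [this, mul_zero, sub_zero]

end Eval

section Univariate

variable {L : Type*} [Field L]

lemma eval_aeval_X (j : Fin n) (v : Fin n → L) (p : Polynomial L) :
    eval v (Polynomial.aeval (X j : MvPolynomial (Fin n) L) p) = Polynomial.eval (v j) p := by
  induction p using Polynomial.induction_on' with
  | add p q hp hq => simp [hp, hq]
  | monomial k c => simp [Polynomial.aeval_monomial]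

lemma eq_zero_of_univariate {G : Type*} [Fintype G] [Nonempty G]
    (j : Fin n) (b : G → L) (hbinj : Function.Injective b)
    (w : G → Fin n → L) (hw : ∀ σ, w σ j = b σ)
    (f : MvPolynomial (Fin n) L)
    (hsupp : ∀ d, coeff d f ≠ 0 → ((∀ i, i ≠ j → d i = 0) ∧ d j < Fintype.card G))
    (heval : ∀ σ, eval (w σ) f = 0) : f = 0 := by
  classical
  set N := Fintype.card G with hN
  have hN0 : 0 < N := Fintype.card_pos
  have hres : ∀ d ∈ f.support, d = Finsupp.single j (d j) := by
    intro d hd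
    rw [MvPolynomial.mem_support_iff] at hd
    ext i
    by_cases h : i = j
    · subst h; simp
    · rw [(hsupp d hd).1 i h, Finsupp.single_apply, if_neg (fun he => h he.symm)]
  set φ : Fin n → Polynomial L := fun i => if i = j then Polynomial.X else 0 with hφ
  set q : Polynomial L := MvPolynomial.aeval φ f with hq
  have hΘ : Polynomial.aeval (X j : MvPolynomial (Fin n) L) q = f := by
    rw [hq]
    conv_rhs => rw [← MvPolynomial.support_sum_monomial_coeff f]
    conv_lhs => rw [← MvPolynomial.support_sum_monomial_coeff f]
    rw [map_sum, map_sum]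
    apply Finset.sum_congr rfl
    intro d hd
    rw [hres d hd, ← MvPolynomial.C_mul_X_pow_eq_monomial]
    simp [hφ]
  have hqsum : q = ∑ d ∈ f.support, Polynomial.C (coeff d f) * Polynomial.X ^ (d j) := by
    rw [hq]
    conv_lhs => rw [← MvPolynomial.support_sum_monomial_coeff f]
    rw [map_sum]
    apply Finset.sum_congr rfl
    intro d hd
    rw [hres d hd, ← MvPolynomial.C_mul_X_pow_eq_monomial]
    simp [hφ]
  have hdeg : q.degree ≤ ((N - 1 : ℕ) : WithBot ℕ) := by
    rw [hqsum]
    refine (Polynomial.degree_sum_le _ _).trans ?_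
    apply Finset.sup_le
    intro d hd
    refine (Polynomial.degree_C_mul_X_pow_le _ _).trans ?_
    have := (hsupp d (by rwa [MvPolynomial.mem_support_iff] at hd)).2
    exact_mod_cast (by omega : d j ≤ N - 1)
  have hq0 : q = 0 := by
    apply Polynomial.eq_zero_of_natDegree_lt_card_of_eval_eq_zero q hbinj
    · intro σ
      have := heval σ
      rw [← hΘ, eval_aeval_X, hw] at this
      exact this
    · have := Polynomial.natDegree_le_iff_degree_le.mpr hdeg
      omega
  rw [← hΘ, hq0, map_zero]

end Univariate

section CoeffSubring

variable {L : Type*} [Field L]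

/-- The subring of polynomials all of whose coefficients lie in `R`. -/
def coeffSubring (R : Subring L) (n : ℕ) : Subring (MvPolynomial (Fin n) L) where
  carrier := {f | ∀ d, coeff d f ∈ R}
  zero_mem' := by intro d; rw [MvPolynomial.coeff_zero]; exact zero_mem R
  one_mem' := by
    intro d
    rw [MvPolynomial.coeff_one]
    split_ifs
    · exact one_mem R
    · exact zero_mem R
  add_mem' := fun hp hq d => by rw [coeff_add]; exact add_mem (hp d) (hq d)
  neg_mem' := fun hp d => by rw [coeff_neg]; exact neg_mem (hp d)
  mul_mem' := fun hp hq d => by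
    classical
    rw [coeff_mul]
    exact sum_mem fun c _ => mul_mem (hp _) (hq _)

lemma mem_coeffSubring {R : Subring L} {f : MvPolynomial (Fin n) L} :
    f ∈ coeffSubring R n ↔ ∀ d, coeff d f ∈ R := Iff.rfl

lemma X_mem_coeffSubring {R : Subring L} (i : Fin n) : (X i : MvPolynomial (Fin n) L) ∈ coeffSubring R n := by
  intro d
  rw [MvPolynomial.coeff_X']
  split_ifs
  · exact one_mem R
  · exact zero_mem R

lemma C_mem_coeffSubring {R : Subring L} {x : L} (hx : x ∈ R) :
    (C x : MvPolynomial (Fin n) L) ∈ coeffSubring R n := by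
  intro d
  rw [MvPolynomial.coeff_C]
  split_ifs
  · exact hx
  · exact zero_mem R

end CoeffSubring

end Derksen

end Helpers

namespace Derksen

open scoped Classical MonomialOrder

/-- For a finite group `G` with trivial stabilizer of `a_1`,
the explicitly given polynomials `f_1, …, f_n` form a reduced Gröbner basis of
the Derksen ideal for every monomial ordering with `y_1^k < y_i` (`i, k > 1`),
and multiplying by the discriminant `a₀` of `f_1` clears all denominators:
`a₀ · f_i ∈ R[y_1,…,y_n]`. -/
theorem statement7 {L G : Type*} [Field L] [Group G] [Fintype G]
    [MulSemiringAction G L]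
    {n : ℕ} (hn : 0 < n) (K : Subring L) (a : Fin n → L)
    (hK : ∀ (σ : G), ∀ x ∈ K, σ • x = x)
    (R : Subring L) (hR : R = Subring.closure (↑K ∪ Set.range a))
    (hRstable : ∀ (σ : G), ∀ x ∈ R, σ • x ∈ R)
    (hQuot : ∀ x : L, ∃ r ∈ R, ∃ s ∈ R, s ≠ 0 ∧ x = r / s)
    -- `a_1` has trivial stabilizer
    (hstab : ∀ σ : G, σ • a ⟨0, hn⟩ = a ⟨0, hn⟩ → σ = 1)
    -- the monomial ordering satisfies `y_1^k < y_i` for all `i ≠ 1`, `k`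
    (m : MonomialOrder (Fin n))
    (hm : ∀ (k : ℕ) (i : Fin n), i ≠ ⟨0, hn⟩ →
      (Finsupp.single (⟨0, hn⟩ : Fin n) k) ≺[m] (Finsupp.single i 1))
    -- the polynomials f_1 and f_i
    (F : Fin n → MvPolynomial (Fin n) L)
    (hF1 : F ⟨0, hn⟩ = ∏ σ : G, (X (⟨0, hn⟩ : Fin n) - C (σ • a ⟨0, hn⟩)))
    (hFi : ∀ i : Fin n, i ≠ ⟨0, hn⟩ → F i =
      X i - ∑ σ : G, C (σ • a i) *
        ∏ τ ∈ Finset.univ.erase σ,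
          (C ((σ • a ⟨0, hn⟩ - τ • a ⟨0, hn⟩)⁻¹) *
            (X (⟨0, hn⟩ : Fin n) - C (τ • a ⟨0, hn⟩))))
    -- the discriminant of f_1
    (a₀ : L)
    (ha₀ : a₀ = ∏ p ∈ (Finset.univ ×ˢ Finset.univ).filter
        (fun p : G × G => p.1 ≠ p.2), (p.1 • a ⟨0, hn⟩ - p.2 • a ⟨0, hn⟩)) :
    IsReducedGroebnerBasis m (derksenIdeal G a) (Finset.univ.image F) ∧
    a₀ ∈ R ∧ (∀ σ : G, σ • a₀ = a₀) ∧ a₀ ≠ 0 ∧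
    (∀ (i : Fin n) (d : Fin n →₀ ℕ), coeff d (C a₀ * F i) ∈ R) := by
  classical
  set j : Fin n := ⟨0, hn⟩ with hj
  set N := Fintype.card G with hNdef
  have hN0 : 0 < N := Fintype.card_pos
  have hnonempty : Nonempty G := ⟨1⟩
  have hbinj : Function.Injective (fun σ : G => σ • a j) := by
    intro σ τ h
    simp only at h
    have h2 : (τ⁻¹ * σ) • a j = a j := by
      rw [mul_smul, h, inv_smul_smul]
    have h3 := hstab _ h2
    rwa [inv_mul_eq_one, eq_comm] at h3
  have hdiff : ∀ {σ τ : G}, σ ≠ τ → σ • a j - τ • a j ≠ 0 := by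
    intro σ τ h
    exact sub_ne_zero.mpr fun he => h (hbinj he)
  have hmemD : ∀ f, f ∈ derksenIdeal G a ↔ ∀ σ : G, eval (fun i => σ • a i) f = 0 := by
    intro f
    simp only [derksenIdeal, Submodule.mem_iInf]
    exact forall_congr' fun σ => mem_span_iff_eval_eq_zero _ f
  set S : Fin n → MvPolynomial (Fin n) L := fun i =>
    ∑ σ : G, C (σ • a i) * ∏ τ ∈ Finset.univ.erase σ,
      (C ((σ • a j - τ • a j)⁻¹) * (X j - C (τ • a j))) with hS
  have hFi' : ∀ i, i ≠ j → F i = X i - S i := by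
    intro i hi
    simp only [hS]
    exact hFi i hi
  have hterm : ∀ (c : G → L) (σ : G),
      C (c σ) * ∏ τ ∈ Finset.univ.erase σ,
        (C ((σ • a j - τ • a j)⁻¹) * (X j - C (τ • a j)))
      = C (c σ * ∏ τ ∈ Finset.univ.erase σ, (σ • a j - τ • a j)⁻¹) *
        ∏ τ ∈ Finset.univ.erase σ, (X j - C (τ • a j)) := by
    intro c σ
    rw [Finset.prod_mul_distrib, ← map_prod, map_mul]
    ring
  have hevalF : ∀ (i : Fin n) (σ : G), eval (fun i' => σ • a i') (F i) = 0 := by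
    intro i σ
    by_cases hi : i = j
    · subst hi
      rw [hF1, map_prod]
      apply Finset.prod_eq_zero (Finset.mem_univ σ)
      simp
    · rw [hFi' i hi, map_sub, eval_X]
      have hsval : eval (fun i' => σ • a i') (S i) = σ • a i := by
        simp only [hS]
        rw [map_sum]
        have hsum : ∀ σ' : G, eval (fun i' => σ • a i')
            (C (σ' • a i) * ∏ τ ∈ Finset.univ.erase σ',
              (C ((σ' • a j - τ • a j)⁻¹) * (X j - C (τ • a j))))
            = if σ' = σ then σ • a i else 0 := by
          intro σ'
          rw [map_mul, eval_C, map_prod]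
          by_cases h : σ' = σ
          · subst h
            rw [if_pos rfl]
            have h1 : ∀ τ ∈ Finset.univ.erase σ', eval (fun i' => σ' • a i')
                (C ((σ' • a j - τ • a j)⁻¹) * (X j - C (τ • a j))) = 1 := by
              intro τ hτ
              have hτσ : τ ≠ σ' := Finset.ne_of_mem_erase hτ
              rw [map_mul, eval_C, map_sub, eval_X, eval_C]
              exact inv_mul_cancel₀ (hdiff (Ne.symm hτσ))
            rw [Finset.prod_congr rfl h1, Finset.prod_const_one, mul_one]
          · rw [if_neg h]
            have hσmem : σ ∈ Finset.univ.erase σ' :=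
              Finset.mem_erase.mpr ⟨fun he => h he.symm, Finset.mem_univ σ⟩
            rw [Finset.prod_eq_zero hσmem, mul_zero]
            rw [map_mul, map_sub, eval_X, eval_C, eval_C, sub_self, mul_zero]
        rw [Finset.sum_congr rfl fun σ' _ => hsum σ',
          Finset.sum_ite_eq' Finset.univ σ (fun _ => σ • a i)]
        simp
      rw [hsval, sub_self]
  have hFjD : ∀ i, F i ∈ derksenIdeal G a := fun i => (hmemD _).mpr (hevalF i)
  have hsupp1 : ∀ d, coeff d (F j) ≠ 0 → (∀ i, i ≠ j → d i = 0) ∧ d j ≤ N := by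
    intro d
    rw [hF1]
    intro hd
    have h := (prod_X_sub_C_coeff j (Finset.univ : Finset G) (fun σ : G => σ • a j)).1 d hd
    rwa [Finset.card_univ, ← hNdef] at h
  have hcoeff1 : coeff (Finsupp.single j N) (F j) = 1 := by
    rw [hF1]
    have h := (prod_X_sub_C_coeff j (Finset.univ : Finset G) (fun σ : G => σ • a j)).2
    rwa [Finset.card_univ, ← hNdef] at h
  have hsS : ∀ i, ∀ d, coeff d (S i) ≠ 0 → (∀ i', i' ≠ j → d i' = 0) ∧ d j < N := by
    intro i d hd
    simp only [hS] at hd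
    rw [MvPolynomial.coeff_sum] at hd
    obtain ⟨σ, _, hσ⟩ := Finset.exists_ne_zero_of_sum_ne_zero hd
    rw [hterm (fun σ' => σ' • a i) σ, coeff_C_mul] at hσ
    have h2 : coeff d (∏ τ ∈ Finset.univ.erase σ, (X j - C (τ • a j))) ≠ 0 :=
      right_ne_zero_of_mul hσ
    obtain ⟨h3, h4⟩ := (prod_X_sub_C_coeff j _ _).1 d h2
    refine ⟨h3, ?_⟩
    rw [Finset.card_erase_of_mem (Finset.mem_univ σ), Finset.card_univ, ← hNdef] at h4
    omega
  have hcoeffi : ∀ i, i ≠ j → coeff (Finsupp.single i 1) (F i) = 1 := by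
    intro i hi
    rw [hFi' i hi, coeff_sub, MvPolynomial.coeff_X', if_pos rfl]
    have h : coeff (Finsupp.single i 1) (S i) = 0 := by
      by_contra h
      have h2 := (hsS i _ h).1 i hi
      simp at h2
    rw [h, sub_zero]
  have hsuppi : ∀ i, i ≠ j → ∀ d, coeff d (F i) ≠ 0 →
      d = Finsupp.single i 1 ∨ ((∀ i', i' ≠ j → d i' = 0) ∧ d j < N) := by
    intro i hi d hd
    rw [hFi' i hi, coeff_sub] at hd
    by_cases h : coeff d (S i) ≠ 0
    · exact Or.inr (hsS i d h)
    · push_neg at h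
      rw [h, sub_zero, MvPolynomial.coeff_X'] at hd
      left
      by_contra hne
      rw [if_neg (fun he => hne he.symm)] at hd
      exact hd rfl
  have hF0 : ∀ i, F i ≠ 0 := by
    intro i
    by_cases hi : i = j
    · subst hi
      intro h
      rw [h, coeff_zero] at hcoeff1
      exact one_ne_zero hcoeff1.symm
    · intro h
      have h2 := hcoeffi i hi
      rw [h, coeff_zero] at h2
      exact one_ne_zero h2.symm
  have hsingle : ∀ (d : Fin n →₀ ℕ), (∀ i', i' ≠ j → d i' = 0) →
      d = Finsupp.single j (d j) := by
    intro d h1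
    ext i'
    by_cases h : i' = j
    · subst h; simp
    · rw [h1 i' h, Finsupp.single_apply, if_neg (fun he => h he.symm)]
  have hlm1 : lm m (F j) = Finsupp.single j N := by
    apply lm_eq_of
    · rw [MvPolynomial.mem_support_iff, hcoeff1]; exact one_ne_zero
    · intro d hd
      rw [MvPolynomial.mem_support_iff] at hd
      obtain ⟨h1, h2⟩ := hsupp1 d hd
      rw [hsingle d h1]
      exact single_toSyn_le h2
  have hlmi : ∀ i, i ≠ j → lm m (F i) = Finsupp.single i 1 := by
    intro i hi
    apply lm_eq_of
    · rw [MvPolynomial.mem_support_iff, hcoeffi i hi]; exact one_ne_zero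
    · intro d hd
      rw [MvPolynomial.mem_support_iff] at hd
      rcases hsuppi i hi d hd with rfl | ⟨h1, h2⟩
      · exact le_refl _
      · rw [hsingle d h1]
        exact (hm (d j) i hi).le
  have hlcF : ∀ i, coeff (lm m (F i)) (F i) = 1 := by
    intro i
    by_cases hi : i = j
    · subst hi; rw [hlm1]; exact hcoeff1
    · rw [hlmi i hi]; exact hcoeffi i hi
  have hdvd : ∀ f ∈ derksenIdeal G a, f ≠ 0 → ∃ i : Fin n, lm m (F i) ≤ lm m f := by
    intro f hf hf0
    by_cases hcase : ∃ i, i ≠ j ∧ lm m f i ≠ 0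
    · obtain ⟨i, hi, hv⟩ := hcase
      refine ⟨i, ?_⟩
      rw [hlmi i hi]
      exact Finsupp.single_le_iff.mpr (by omega)
    · push_neg at hcase
      have huni : ∀ d, coeff d f ≠ 0 → ∀ i, i ≠ j → d i = 0 := by
        intro d hd i hi
        by_contra h
        have h2 : m.toSyn (Finsupp.single i 1) ≤ m.toSyn d :=
          m.toSyn_monotone (Finsupp.single_le_iff.mpr (by omega))
        have h3 : m.toSyn d ≤ m.toSyn (lm m f) :=
          le_toSyn_lm (MvPolynomial.mem_support_iff.mpr hd)
        have h4 : lm m f = Finsupp.single j (lm m f j) := hsingle _ hcase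
        have h5 := hm (lm m f j) i hi
        rw [← h4] at h5
        exact absurd (h2.trans h3) (not_le.mpr h5)
      have hbig : ∃ d ∈ f.support, N ≤ d j := by
        by_contra h
        push_neg at h
        apply hf0
        apply eq_zero_of_univariate j (fun σ : G => σ • a j) hbinj
          (fun σ i => σ • a i) (fun σ => rfl) f
        · intro d hd
          refine ⟨huni d hd, ?_⟩
          have h6 := h d (MvPolynomial.mem_support_iff.mpr hd)
          omega
        · exact (hmemD f).mp hf
      obtain ⟨d, hd, hdN⟩ := hbig
      refine ⟨j, ?_⟩
      rw [hlm1]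
      have h6 := le_toSyn_lm (f := f) (m := m) hd
      have h7 : lm m f = Finsupp.single j (lm m f j) := hsingle _ hcase
      have h8 : d = Finsupp.single j (d j) :=
        hsingle _ (huni d (MvPolynomial.mem_support_iff.mp hd))
      have h9 : N ≤ lm m f j := by
        by_contra hlt
        push_neg at hlt
        have hlt2 : m.toSyn (lm m f) < m.toSyn d := by
          rw [h7]
          conv_rhs => rw [h8]
          apply m.toSyn_strictMono
          apply lt_of_le_of_ne (Finsupp.single_le_single.mpr (by omega))
          intro hee
          have hc := congrArg (fun s : Fin n →₀ ℕ => s j) hee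
          simp only [Finsupp.single_eq_same] at hc
          omega
        exact absurd h6 (not_le.mpr hlt2)
      exact Finsupp.single_le_iff.mpr h9
  set B : Finset (MvPolynomial (Fin n) L) := Finset.univ.image F with hB
  have hmemB : ∀ i, F i ∈ B := fun i => Finset.mem_image_of_mem F (Finset.mem_univ i)
  have hspan_le : Ideal.span (B : Set (MvPolynomial (Fin n) L)) ≤ derksenIdeal G a := by
    rw [Ideal.span_le]
    intro g hg
    obtain ⟨i, _, rfl⟩ := Finset.mem_image.mp (by exact_mod_cast hg)
    exact hFjD i
  have hred : ∀ s : m.syn, ∀ f, f ∈ derksenIdeal G a → m.toSyn (lm m f) = s →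
      f ∈ Ideal.span (B : Set (MvPolynomial (Fin n) L)) := by
    intro s
    induction s using WellFoundedLT.induction with
    | _ s IH =>
    intro f hf hs
    by_cases hf0 : f = 0
    · subst hf0; exact Ideal.zero_mem _
    obtain ⟨i, hile⟩ := hdvd f hf hf0
    set e := lm m f - lm m (F i) with he'
    have he : lm m (F i) + e = lm m f := by
      rw [he']
      exact add_tsub_cancel_of_le hile
    set c := lc m f with hc
    set g := f - monomial e c * F i with hg
    have hgD : g ∈ derksenIdeal G a :=
      sub_mem hf (Ideal.mul_mem_left _ _ (hFjD i))
    have hcoeffg : ∀ d, coeff d g ≠ 0 → m.toSyn d < m.toSyn (lm m f) := by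
      intro d hd
      rcases eq_or_ne d (lm m f) with rfl | hne
      · exfalso
        apply hd
        rw [hg, coeff_sub, coeff_monomial_mul']
        have hele : e ≤ lm m f := by rw [← he]; exact le_add_self
        rw [if_pos hele]
        have h10 : lm m f - e = lm m (F i) := by
          rw [he']
          ext i'
          have hpt := Finsupp.le_def.mp hile i'
          simp only [Finsupp.coe_tsub, Pi.sub_apply]
          omega
        rw [h10, hlcF i, mul_one, hc, lc, sub_self]
      · have h1 : coeff d f ≠ 0 ∨ coeff d (monomial e c * F i) ≠ 0 := by
          by_contra hcon
          push_neg at hcon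
          rw [hg, coeff_sub, hcon.1, hcon.2, sub_zero] at hd
          exact hd rfl
        rcases h1 with h1 | h1
        · exact lt_of_le_of_ne (le_toSyn_lm (MvPolynomial.mem_support_iff.mpr h1))
            (fun hee => hne (m.toSyn.injective hee))
        · rw [coeff_monomial_mul'] at h1
          split_ifs at h1 with hele
          · have h2 : coeff (d - e) (F i) ≠ 0 := right_ne_zero_of_mul h1
            have h3 : m.toSyn (d - e) ≤ m.toSyn (lm m (F i)) :=
              le_toSyn_lm (MvPolynomial.mem_support_iff.mpr h2)
            have h4 : d = e + (d - e) := (add_tsub_cancel_of_le hele).symm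
            have h5 : m.toSyn d ≤ m.toSyn (lm m f) := by
              conv_lhs => rw [h4]
              rw [← he, map_add, map_add, add_comm (m.toSyn (lm m (F i)))]
              exact add_le_add_right h3 _
            exact lt_of_le_of_ne h5 (fun hee => hne (m.toSyn.injective hee))
          · exact absurd rfl h1
    by_cases hg0 : g = 0
    · have h0 : f - monomial e c * F i = 0 := by rw [← hg]; exact hg0
      rw [sub_eq_zero.mp h0]
      exact Ideal.mul_mem_left _ _ (Ideal.subset_span (by exact_mod_cast hmemB i))
    · have hlt : m.toSyn (lm m g) < s := by
        rw [← hs]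
        exact hcoeffg _ (lc_ne_zero hg0)
      have hgspan := IH _ hlt g hgD rfl
      have hfeq : f = g + monomial e c * F i := by rw [hg]; ring
      rw [hfeq]
      exact Ideal.add_mem _ hgspan
        (Ideal.mul_mem_left _ _ (Ideal.subset_span (by exact_mod_cast hmemB i)))
  have hspan : Ideal.span (B : Set (MvPolynomial (Fin n) L)) = derksenIdeal G a :=
    le_antisymm hspan_le (fun f hf => hred _ f hf rfl)
  have haR : ∀ (σ : G) (i : Fin n), σ • a i ∈ R := by
    intro σ i
    apply hRstable
    rw [hR]
    exact Subring.subset_closure (Or.inr ⟨i, rfl⟩)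
  have ha₀R : a₀ ∈ R := by
    rw [ha₀]
    exact prod_mem fun p _ => sub_mem (haR p.1 j) (haR p.2 j)
  have ha₀inv : ∀ σ : G, σ • a₀ = a₀ := by
    intro σ
    rw [ha₀, Finset.smul_prod', Finset.prod_filter, Finset.prod_filter,
      Finset.univ_product_univ]
    exact Fintype.prod_equiv (Equiv.prodCongr (Equiv.mulLeft σ) (Equiv.mulLeft σ))
      _ _ (by
        intro p
        simp only [Equiv.prodCongr_apply, Equiv.coe_mulLeft, Prod.map]
        by_cases h : p.1 ≠ p.2
        · rw [if_pos h, if_pos (by simpa using h), smul_sub, mul_smul, mul_smul]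
        · rw [if_neg h, if_neg (by simpa using h)])
  have ha₀ne : a₀ ≠ 0 := by
    rw [ha₀]
    apply Finset.prod_ne_zero_iff.mpr
    intro p hp
    exact hdiff (Finset.mem_filter.mp hp).2
  have hquot : ∀ σ : G, a₀ * ∏ τ ∈ Finset.univ.erase σ, (σ • a j - τ • a j)⁻¹ ∈ R := by
    intro σ
    have e1 : ∏ p ∈ (Finset.univ ×ˢ Finset.univ).filter
          (fun p : G × G => p.1 ≠ p.2 ∧ p.1 = σ), (p.1 • a j - p.2 • a j)
        = ∏ τ ∈ Finset.univ.erase σ, (σ • a j - τ • a j) := by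
      refine Finset.prod_bij' (fun p _ => p.2) (fun τ _ => (σ, τ))
        (fun p hp => ?_) (fun τ hτ => ?_) (fun p hp => ?_) (fun τ hτ => rfl)
        (fun p hp => ?_)
      · rw [Finset.mem_filter] at hp
        rw [Finset.mem_erase]
        exact ⟨fun he => hp.2.1 (hp.2.2.trans he.symm), Finset.mem_univ _⟩
      · rw [Finset.mem_erase] at hτ
        rw [Finset.mem_filter]
        exact ⟨Finset.mem_product.mpr ⟨Finset.mem_univ _, Finset.mem_univ _⟩,
          fun he => hτ.1 he.symm, rfl⟩
      · rw [Finset.mem_filter] at hp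
        exact Prod.ext hp.2.2.symm rfl
      · rw [Finset.mem_filter] at hp
        rw [hp.2.2]
    have e2 : (Finset.univ ×ˢ Finset.univ).filter
          (fun p : G × G => p.1 ≠ p.2 ∧ ¬p.1 = σ)
        = (Finset.univ ×ˢ Finset.univ).filter
          (fun p : G × G => p.1 ≠ p.2 ∧ p.1 ≠ σ) := by
      apply Finset.filter_congr
      intro p _
      tauto
    have hsplit : a₀ = (∏ τ ∈ Finset.univ.erase σ, (σ • a j - τ • a j)) *
        ∏ p ∈ (Finset.univ ×ˢ Finset.univ).filter
          (fun p : G × G => p.1 ≠ p.2 ∧ p.1 ≠ σ), (p.1 • a j - p.2 • a j) := by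
      rw [ha₀, ← Finset.prod_filter_mul_prod_filter_not
        ((Finset.univ ×ˢ Finset.univ).filter (fun p : G × G => p.1 ≠ p.2))
        (fun p => p.1 = σ), Finset.filter_filter, Finset.filter_filter, e1, e2]
    have hone : (∏ τ ∈ Finset.univ.erase σ, (σ • a j - τ • a j)) *
        ∏ τ ∈ Finset.univ.erase σ, (σ • a j - τ • a j)⁻¹ = 1 := by
      rw [← Finset.prod_mul_distrib]
      apply Finset.prod_eq_one
      intro τ hτ
      exact mul_inv_cancel₀ (hdiff (fun he => (Finset.mem_erase.mp hτ).1 he.symm))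
    have hcalc : a₀ * ∏ τ ∈ Finset.univ.erase σ, (σ • a j - τ • a j)⁻¹ =
        ∏ p ∈ (Finset.univ ×ˢ Finset.univ).filter
          (fun p : G × G => p.1 ≠ p.2 ∧ p.1 ≠ σ), (p.1 • a j - p.2 • a j) := by
      rw [hsplit, mul_comm (∏ τ ∈ Finset.univ.erase σ, (σ • a j - τ • a j)), mul_assoc,
        hone, mul_one]
    rw [hcalc]
    exact prod_mem fun p _ => sub_mem (haR _ _) (haR _ _)
  have hfinal : ∀ (i : Fin n) (d : Fin n →₀ ℕ), coeff d (C a₀ * F i) ∈ R := by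
    intro i d
    suffices h : C a₀ * F i ∈ coeffSubring R n from h d
    by_cases hi : i = j
    · subst hi
      rw [hF1]
      exact mul_mem (C_mem_coeffSubring ha₀R)
        (prod_mem fun σ _ => sub_mem (X_mem_coeffSubring j)
          (C_mem_coeffSubring (haR σ j)))
    · rw [hFi' i hi, mul_sub]
      apply sub_mem
      · exact mul_mem (C_mem_coeffSubring ha₀R) (X_mem_coeffSubring i)
      · simp only [hS]
        rw [Finset.mul_sum]
        apply sum_mem
        intro σ _
        have heq : C a₀ * (C (σ • a i) * ∏ τ ∈ Finset.univ.erase σ,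
              (C ((σ • a j - τ • a j)⁻¹) * (X j - C (τ • a j))))
            = C (σ • a i) *
              (C (a₀ * ∏ τ ∈ Finset.univ.erase σ, (σ • a j - τ • a j)⁻¹) *
              ∏ τ ∈ Finset.univ.erase σ, (X j - C (τ • a j))) := by
          rw [hterm (fun σ' => σ' • a i) σ, map_mul, map_mul]
          ring
        rw [heq]
        exact mul_mem (C_mem_coeffSubring (haR σ i))
          (mul_mem (C_mem_coeffSubring (hquot σ))
            (prod_mem fun τ _ => sub_mem (X_mem_coeffSubring j)
              (C_mem_coeffSubring (haR τ j))))
  refine ⟨⟨⟨?_, ?_, hspan, ?_⟩, ?_, ?_⟩, ha₀R, ha₀inv, ha₀ne, hfinal⟩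
  · intro h
    obtain ⟨i, _, hi⟩ := Finset.mem_image.mp h
    exact hF0 i hi
  · intro g hg
    obtain ⟨i, _, rfl⟩ := Finset.mem_image.mp (by exact_mod_cast hg)
    exact hFjD i
  · intro f hf hf0
    obtain ⟨i, h⟩ := hdvd f hf hf0
    exact ⟨F i, hmemB i, h⟩
  · intro g hg
    obtain ⟨i, _, rfl⟩ := Finset.mem_image.mp hg
    exact hlcF i
  · intro g hg g' hg' hne d hd
    obtain ⟨i, _, rfl⟩ := Finset.mem_image.mp hg
    obtain ⟨i', _, rfl⟩ := Finset.mem_image.mp hg'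
    have hii : i' ≠ i := fun h => hne (by rw [h])
    rw [MvPolynomial.mem_support_iff] at hd
    intro hle
    by_cases hi : i = j
    · subst hi
      have hi' : i' ≠ j := hii
      rw [hlmi i' hi'] at hle
      have h1 := Finsupp.single_le_iff.mp hle
      have h2 := (hsupp1 d hd).1 i' hi'
      omega
    · rcases hsuppi i hi d hd with rfl | ⟨h1, h2⟩
      · by_cases hi' : i' = j
        · subst hi'
          rw [hlm1] at hle
          have h3 := Finsupp.single_le_iff.mp hle
          rw [Finsupp.single_apply, if_neg hi] at h3
          omega
        · rw [hlmi i' hi'] at hle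
          have h3 := Finsupp.single_le_iff.mp hle
          rw [Finsupp.single_apply, if_neg (fun he => hii he.symm)] at h3
          omega
      · by_cases hi' : i' = j
        · subst hi'
          rw [hlm1] at hle
          have h3 := Finsupp.single_le_iff.mp hle
          omega
        · rw [hlmi i' hi'] at hle
          have h3 := Finsupp.single_le_iff.mp hle
          have h4 := h1 i' hi'
          omega


end Derksen
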